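/- arXiv:2308.05883 — 3 statements merged into one kernel-verified Lean document; each statement's English description precedes it below -/
import Mathlib

section
/- For a joint density f(y, s) with marginal f₁(y) of the first coordinate, the conditional Fisher information dominates the marginal Fisher information: I_{Y|S} ≥ I_Y, where I_Y = ∫ (f₁'(y)/f₁(y))² f₁(y) dy and I_{Y|S} = ∫∫ (∂_y f(y|s)/f(y|s))² f(y, s) dy ds. Moreover, the difference I_{Y|S} − I_Y equals ∫∫ (∂_y f(s|y)/f(s|y))² f(y, s) dy ds. -/
open MeasureTheory Real

/-- **Fisher information decomposition.** For a joint density `f(y,s)` with marginal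
`f₁(y) = ∫ f(y,s) ds`, the conditional Fisher information dominates the marginal one:
`I_{Y|S} ≥ I_Y`, and moreover
`I_{Y|S} − I_Y = ∫∫ (∂_y f(s|y) / f(s|y))² f(y,s) dy ds`,
where `f(s|y) = f(y,s)/f₁(y)` and the score of `f(y|s)` in `y` is `∂_y f(y,s)/f(y,s)`. -/
theorem conditional_fisher_info_ge_marginal (K : ℕ)
    (f fy : ℝ → (Fin K → ℝ) → ℝ)
    (hfpos : ∀ y s, 0 < f y s)
    (f1 : ℝ → ℝ) (hf1 : ∀ y, f1 y = ∫ s, f y s)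
    (hf1pos : ∀ y, 0 < f1 y)
    -- `fy` is the partial derivative of `f` in its first argument
    (hfy : ∀ s y, HasDerivAt (fun y' => f y' s) (fy y s) y)
    -- differentiation under the integral sign:  `f₁'(y) = ∫ ∂_y f(y,s) ds`
    (hf1deriv : ∀ y, HasDerivAt f1 (∫ s, fy y s) y)
    -- integrability assumptions guaranteeing that all displayed integrals are finite
    (hIY : Integrable (fun y => ((∫ s, fy y s) / f1 y) ^ 2 * f1 y))
    (hIYS₁ : ∀ y, Integrable (fun s => (fy y s / f y s) ^ 2 * f y s))
    (hIYS₂ : Integrable (fun y => ∫ s, (fy y s / f y s) ^ 2 * f y s))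
    (hD₁ : ∀ y, Integrable (fun s =>
      (((fy y s * f1 y - f y s * (∫ s', fy y s')) / (f1 y) ^ 2) / (f y s / f1 y)) ^ 2 * f y s))
    (hD₂ : Integrable (fun y => ∫ s,
      (((fy y s * f1 y - f y s * (∫ s', fy y s')) / (f1 y) ^ 2) / (f y s / f1 y)) ^ 2 * f y s)) :
    (∫ y, ((∫ s, fy y s) / f1 y) ^ 2 * f1 y)
        ≤ (∫ y, ∫ s, (fy y s / f y s) ^ 2 * f y s)
    ∧ (∫ y, ∫ s, (fy y s / f y s) ^ 2 * f y s)
        - (∫ y, ((∫ s, fy y s) / f1 y) ^ 2 * f1 y)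
      = ∫ y, ∫ s,
          (((fy y s * f1 y - f y s * (∫ s', fy y s')) / (f1 y) ^ 2) / (f y s / f1 y)) ^ 2
            * f y s := by
  -- key pointwise-in-y identity
  have key : ∀ y,
      (∫ s, (((fy y s * f1 y - f y s * (∫ s', fy y s')) / (f1 y) ^ 2) / (f y s / f1 y)) ^ 2
          * f y s)
      = (∫ s, (fy y s / f y s) ^ 2 * f y s) - ((∫ s, fy y s) / f1 y) ^ 2 * f1 y := by
    intro y
    have hf1y : f1 y ≠ 0 := (hf1pos y).ne'
    set F : ℝ := ∫ s, fy y s with hF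
    set m : ℝ := F / f1 y with hm
    have hDeq : ∀ s,
        (((fy y s * f1 y - f y s * F) / (f1 y) ^ 2) / (f y s / f1 y)) ^ 2 * f y s
        = (fy y s / f y s - m) ^ 2 * f y s := by
      intro s
      have hfs : f y s ≠ 0 := (hfpos y s).ne'
      rw [hm]
      field_simp
    rw [show (fun s => (((fy y s * f1 y - f y s * F) / (f1 y) ^ 2) / (f y s / f1 y)) ^ 2
          * f y s) = fun s => (fy y s / f y s - m) ^ 2 * f y s from funext hDeq]
    -- f y · is integrable since its integral equals f1 y > 0
    have hfint : Integrable (fun s => f y s) := by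
      by_contra hni
      have : (∫ s, f y s) = 0 := integral_undef hni
      rw [← hf1 y] at this
      exact (hf1pos y).ne' this
    have hAint := hIYS₁ y
    have hDint : Integrable (fun s => (fy y s / f y s - m) ^ 2 * f y s) :=
      (hD₁ y).congr (Filter.Eventually.of_forall fun s => (hDeq s))
    by_cases hmz : m = 0
    · have hFz : F = 0 := by
        have := hm ▸ hmz
        field_simp at this
        simpa using this
      simp [hmz]
    · -- fy is integrable
      have hfyint : Integrable (fun s => fy y s) := by
        have h1 : Integrable (fun s =>
            ((fy y s / f y s) ^ 2 * f y s + m ^ 2 * f y s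
              - (fy y s / f y s - m) ^ 2 * f y s) * (1 / (2 * m))) :=
          ((hAint.add (hfint.const_mul (m ^ 2))).sub hDint).mul_const _
        refine h1.congr (Filter.Eventually.of_forall fun s => ?_)
        have hfs : f y s ≠ 0 := (hfpos y s).ne'
        field_simp
        ring
      -- expand the square inside the integral
      have hexp : ∀ s, (fy y s / f y s - m) ^ 2 * f y s
          = (fy y s / f y s) ^ 2 * f y s - (2 * m * fy y s - m ^ 2 * f y s) := by
        intro s
        have hfs : f y s ≠ 0 := (hfpos y s).ne'
        field_simp
        ring
      rw [show (fun s => (fy y s / f y s - m) ^ 2 * f y s)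
            = fun s => (fy y s / f y s) ^ 2 * f y s - (2 * m * fy y s - m ^ 2 * f y s)
          from funext hexp]
      have h2 : Integrable (fun s => 2 * m * fy y s - m ^ 2 * f y s) :=
        (hfyint.const_mul (2 * m)).sub (hfint.const_mul (m ^ 2))
      rw [integral_sub hAint h2,
        integral_sub (hfyint.const_mul (2 * m)) (hfint.const_mul (m ^ 2)),
        integral_const_mul, integral_const_mul, ← hF, ← hf1 y]
      rw [hm]
      field_simp
      ring
  have heq : (∫ y, ∫ s,
        (((fy y s * f1 y - f y s * (∫ s', fy y s')) / (f1 y) ^ 2) / (f y s / f1 y)) ^ 2 * f y s)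
      = (∫ y, ∫ s, (fy y s / f y s) ^ 2 * f y s)
        - (∫ y, ((∫ s, fy y s) / f1 y) ^ 2 * f1 y) := by
    rw [show (fun y => ∫ s,
          (((fy y s * f1 y - f y s * (∫ s', fy y s')) / (f1 y) ^ 2) / (f y s / f1 y)) ^ 2
            * f y s)
        = fun y => (∫ s, (fy y s / f y s) ^ 2 * f y s) - ((∫ s, fy y s) / f1 y) ^ 2 * f1 y
        from funext key]
    exact integral_sub hIYS₂ hIY
  have hpos : 0 ≤ ∫ y, ∫ s,
      (((fy y s * f1 y - f y s * (∫ s', fy y s')) / (f1 y) ^ 2) / (f y s / f1 y)) ^ 2 * f y s := by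
    refine integral_nonneg fun y => ?_
    refine integral_nonneg fun s => ?_
    exact mul_nonneg (sq_nonneg _) (hfpos y s).le
  constructor
  · linarith [heq ▸ hpos]
  · exact heq.symm
end

section
/- Brown's identity: if Y = θ + ε with ε ~ N(0, σ²) independent of θ ~ G, and f is the marginal density of Y, then the Bayes risk of the posterior mean estimator δ(y) = y + σ² f'(y)/f(y) equals σ² − σ⁴ I(f), where I(f) = ∫ (f'(y))²/f(y) dy is the Fisher information of the marginal density. -/
open MeasureTheory ProbabilityTheory Real Set Filter Function
open scoped NNReal ENNReal

/-- The Gaussian density with mean 0 and variance σ². -/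
noncomputable def gaussDensity (σ x : ℝ) : ℝ :=
  (Real.sqrt (2 * Real.pi * σ ^ 2))⁻¹ * Real.exp (-x ^ 2 / (2 * σ ^ 2))

lemma gaussDensity_eq_pdf {σ : ℝ} (hσ : 0 < σ) :
    gaussDensity σ = gaussianPDFReal 0 (σ ^ 2).toNNReal := by
  funext x
  have h2 : (((σ ^ 2).toNNReal) : ℝ) = σ ^ 2 := Real.coe_toNNReal _ (by positivity)
  simp only [gaussDensity, gaussianPDFReal, h2, sub_zero]

lemma gaussDensity_nonneg (σ x : ℝ) : 0 ≤ gaussDensity σ x := by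
  unfold gaussDensity; positivity

lemma continuous_gaussDensity (σ : ℝ) : Continuous (gaussDensity σ) := by
  unfold gaussDensity; fun_prop

lemma gaussDensity_le {σ : ℝ} (hσ : 0 < σ) (x : ℝ) :
    gaussDensity σ x ≤ (Real.sqrt (2 * Real.pi * σ ^ 2))⁻¹ := by
  unfold gaussDensity
  have h1 : Real.exp (-x ^ 2 / (2 * σ ^ 2)) ≤ 1 := by
    rw [Real.exp_le_one_iff]
    exact div_nonpos_of_nonpos_of_nonneg (neg_nonpos.mpr (by positivity)) (by positivity)
  calc (Real.sqrt (2 * Real.pi * σ ^ 2))⁻¹ * Real.exp (-x ^ 2 / (2 * σ ^ 2))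
      ≤ (Real.sqrt (2 * Real.pi * σ ^ 2))⁻¹ * 1 := by
        apply mul_le_mul_of_nonneg_left h1 (by positivity)
    _ = _ := mul_one _

lemma abs_mul_exp_le {σ : ℝ} (hσ : 0 < σ) (x : ℝ) :
    |x| * Real.exp (-x ^ 2 / (2 * σ ^ 2)) ≤ 2 * σ := by
  rcases le_or_gt |x| σ with h | h
  · have h1 : Real.exp (-x ^ 2 / (2 * σ ^ 2)) ≤ 1 := by
      rw [Real.exp_le_one_iff]
      exact div_nonpos_of_nonpos_of_nonneg (neg_nonpos.mpr (by positivity)) (by positivity)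
    nlinarith [abs_nonneg x, Real.exp_nonneg (-x ^ 2 / (2 * σ ^ 2))]
  · have hx0 : 0 < |x| := lt_trans hσ h
    have hu : x ^ 2 / (2 * σ ^ 2) ≤ Real.exp (x ^ 2 / (2 * σ ^ 2)) := by
      nlinarith [Real.add_one_le_exp (x ^ 2 / (2 * σ ^ 2))]
    have hxa : |x| ≠ 0 := hx0.ne'
    have hx2 : (0:ℝ) < x ^ 2 := by rw [← sq_abs]; exact pow_pos hx0 2
    have hexp : Real.exp (-x ^ 2 / (2 * σ ^ 2)) ≤ 2 * σ ^ 2 / x ^ 2 := by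
      rw [neg_div, Real.exp_neg]
      rw [inv_le_comm₀ (Real.exp_pos _) (div_pos (by positivity) hx2)]
      calc (2 * σ ^ 2 / x ^ 2)⁻¹ = x ^ 2 / (2 * σ ^ 2) := by rw [inv_div]
        _ ≤ _ := hu
    calc |x| * Real.exp (-x ^ 2 / (2 * σ ^ 2)) ≤ |x| * (2 * σ ^ 2 / x ^ 2) := by
          exact mul_le_mul_of_nonneg_left hexp (abs_nonneg x)
      _ = 2 * σ ^ 2 / |x| := by
          field_simp
          rw [sq_abs, div_self hx2.ne']
      _ ≤ 2 * σ ^ 2 / σ := by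
          apply div_le_div_of_nonneg_left (by positivity) hσ h.le
      _ = 2 * σ := by field_simp

lemma hasDerivAt_gaussDensity {σ : ℝ} (hσ : 0 < σ) (t y : ℝ) :
    HasDerivAt (fun y => gaussDensity σ (y - t))
      (-(y - t) / σ ^ 2 * gaussDensity σ (y - t)) y := by
  have hσ2 : (σ : ℝ) ^ 2 ≠ 0 := by positivity
  have h0 : HasDerivAt (fun y : ℝ => y - t) 1 y := (hasDerivAt_id y).sub_const t
  have h1 : HasDerivAt (fun y : ℝ => (y - t) ^ 2) (2 * (y - t)) y := by
    simpa using h0.fun_pow 2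
  have h2 : HasDerivAt (fun y : ℝ => -(y - t) ^ 2 / (2 * σ ^ 2))
      (-(y - t) / σ ^ 2) y := by
    have h2' := h1.const_mul (-1 / (2 * σ ^ 2))
    have e1 : (fun y : ℝ => -1 / (2 * σ ^ 2) * (y - t) ^ 2)
        = (fun y : ℝ => -(y - t) ^ 2 / (2 * σ ^ 2)) := by funext z; ring
    have e2 : -1 / (2 * σ ^ 2) * (2 * (y - t)) = -(y - t) / σ ^ 2 := by
      field_simp
    rw [e1, e2] at h2'
    exact h2'
  have h3 := h2.exp
  have h4 := h3.const_mul ((Real.sqrt (2 * Real.pi * σ ^ 2))⁻¹)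
  unfold gaussDensity
  exact h4.congr_deriv (by ring)

lemma integrable_gaussDensity_shift {σ : ℝ} (hσ : 0 < σ) (ν : Measure ℝ)
    [IsFiniteMeasure ν] (y : ℝ) :
    Integrable (fun t => gaussDensity σ (y - t)) ν := by
  refine Integrable.mono' (integrable_const ((Real.sqrt (2 * Real.pi * σ ^ 2))⁻¹)) ?_ ?_
  · exact (((continuous_gaussDensity σ).comp (continuous_const.sub continuous_id)).aestronglyMeasurable)
  · refine ae_of_all _ fun t => ?_
    rw [Real.norm_eq_abs, abs_of_nonneg (gaussDensity_nonneg _ _)]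
    exact gaussDensity_le hσ _

lemma hasDerivAt_marginal {σ : ℝ} (hσ : 0 < σ) (ν : Measure ℝ) [IsProbabilityMeasure ν]
    (y : ℝ) :
    HasDerivAt (fun y => ∫ t, gaussDensity σ (y - t) ∂ν)
      (∫ t, -(y - t) / σ ^ 2 * gaussDensity σ (y - t) ∂ν) y := by
  set c : ℝ := (Real.sqrt (2 * Real.pi * σ ^ 2))⁻¹ with hc
  have hc0 : 0 ≤ c := by positivity
  have hmeas : ∀ x : ℝ, AEStronglyMeasurable (fun t => gaussDensity σ (x - t)) ν := fun x =>
    ((continuous_gaussDensity σ).comp (continuous_const.sub continuous_id)).aestronglyMeasurable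
  have key := hasDerivAt_integral_of_dominated_loc_of_deriv_le
    (F := fun x t => gaussDensity σ (x - t))
    (F' := fun x t => -(x - t) / σ ^ 2 * gaussDensity σ (x - t))
    (bound := fun _ => 2 * σ * c / σ ^ 2) (μ := ν) (x₀ := y)
    (Metric.ball_mem_nhds y one_pos)
    (Eventually.of_forall hmeas)
    (integrable_gaussDensity_shift hσ ν y)
    (Continuous.aestronglyMeasurable
      ((((continuous_const.sub continuous_id).neg.div_const _).mul
        ((continuous_gaussDensity σ).comp (continuous_const.sub continuous_id)))))
    (ae_of_all _ fun t x _ => by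
      rw [Real.norm_eq_abs, abs_mul, abs_div, abs_neg, abs_of_nonneg (gaussDensity_nonneg _ _),
        abs_of_nonneg (sq_nonneg σ)]
      calc |x - t| / σ ^ 2 * gaussDensity σ (x - t)
          = |x - t| * gaussDensity σ (x - t) / σ ^ 2 := by ring
        _ ≤ 2 * σ * c / σ ^ 2 := by
            gcongr ?_ / _
            calc |x - t| * gaussDensity σ (x - t)
                = c * (|x - t| * Real.exp (-(x - t) ^ 2 / (2 * σ ^ 2))) := by
                  unfold gaussDensity; ring
              _ ≤ c * (2 * σ) :=
                  mul_le_mul_of_nonneg_left (abs_mul_exp_le hσ _) hc0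
              _ = 2 * σ * c := by ring)
    (integrable_const _)
    (ae_of_all _ fun t x _ => hasDerivAt_gaussDensity hσ t x)
  exact key.2

lemma prod_gaussianReal {σ : ℝ} (hσ : 0 < σ) (ν : Measure ℝ) [SigmaFinite ν] :
    ν.prod (gaussianReal 0 (σ ^ 2).toNNReal) =
      (ν.prod volume).withDensity (fun p => gaussianPDF 0 (σ ^ 2).toNNReal p.2) := by
  have hV : (σ ^ 2).toNNReal ≠ 0 := (Real.toNNReal_pos.mpr (by positivity)).ne'
  refine Measure.prod_eq fun s t hs ht => ?_
  rw [withDensity_apply _ (hs.prod ht), ← Measure.prod_restrict s t]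
  rw [MeasureTheory.lintegral_prod (fun p => gaussianPDF 0 (σ ^ 2).toNNReal p.2)
    ((measurable_gaussianPDF 0 _).comp measurable_snd).aemeasurable]
  simp only
  rw [gaussianReal_apply 0 hV t]
  rw [lintegral_const, Measure.restrict_apply_univ, mul_comm]

lemma integral_gaussianReal_eq {σ : ℝ} (hσ : 0 < σ) (g : ℝ → ℝ) (hg : AEStronglyMeasurable g (volume : Measure ℝ)) :
    ∫ x, g x ∂(gaussianReal 0 (σ ^ 2).toNNReal) = ∫ x, g x * gaussDensity σ x := by
  have hV : (σ ^ 2).toNNReal ≠ 0 := (Real.toNNReal_pos.mpr (by positivity)).ne'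
  rw [gaussianReal_of_var_ne_zero 0 hV]
  have hd : (gaussianPDF 0 (σ ^ 2).toNNReal)
      = fun x => ((Real.toNNReal (gaussianPDFReal 0 (σ ^ 2).toNNReal x) : ℝ≥0) : ℝ≥0∞) := rfl
  rw [hd, integral_withDensity_eq_integral_smul
    ((measurable_gaussianPDFReal 0 _).real_toNNReal) g]
  congr 1
  funext x
  rw [NNReal.smul_def, smul_eq_mul, Real.coe_toNNReal _ (gaussianPDFReal_nonneg 0 _ x),
    mul_comm, gaussDensity_eq_pdf hσ]

lemma transfer {σ : ℝ} (hσ : 0 < σ) (ν : Measure ℝ) [IsProbabilityMeasure ν]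
    (F : ℝ → ℝ → ℝ) (hF : Measurable (Function.uncurry F))
    (hint : Integrable (Function.uncurry F) (ν.prod (gaussianReal 0 (σ ^ 2).toNNReal))) :
    ∫ p, F p.1 p.2 ∂(ν.prod (gaussianReal 0 (σ ^ 2).toNNReal))
      = ∫ y, ∫ t, F t (y - t) * gaussDensity σ (y - t) ∂ν := by
  have hV : (σ ^ 2).toNNReal ≠ 0 := (Real.toNNReal_pos.mpr (by positivity)).ne'
  set γ : Measure ℝ := gaussianReal 0 (σ ^ 2).toNNReal with hγ
  -- Step 1: iterated integral
  rw [show (fun p : ℝ × ℝ => F p.1 p.2) = Function.uncurry F from rfl,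
    MeasureTheory.integral_prod _ hint]
  -- Step 2: rewrite inner integral with density and translation
  have step2 : ∀ t : ℝ, ∫ x, Function.uncurry F (t, x) ∂γ
      = ∫ y, F t (y - t) * gaussDensity σ (y - t) := by
    intro t
    have hgm : AEStronglyMeasurable (fun x => F t x) (volume : Measure ℝ) :=
      (hF.comp (measurable_prodMk_left (x := t))).aestronglyMeasurable
    rw [show (fun x => Function.uncurry F (t, x)) = fun x => F t x from rfl,
      integral_gaussianReal_eq hσ _ hgm]
    exact (integral_sub_right_eq_self (fun y => F t y * gaussDensity σ y) t).symm
  simp_rw [Function.uncurry_apply_pair] at step2 ⊢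
  rw [show (fun t => ∫ x, F t x ∂γ) = (fun t => ∫ y, F t (y - t) * gaussDensity σ (y - t)) from
    funext step2]
  -- Step 3: swap the order of integration
  have hS : MeasurePreserving (fun z : ℝ × ℝ => (z.1, z.1 + z.2))
      (ν.prod volume) (ν.prod volume) := measurePreserving_prod_add ν volume
  have hGmeas : Measurable (fun p : ℝ × ℝ => F p.1 (p.2 - p.1) * gaussDensity σ (p.2 - p.1)) :=
    (hF.comp (measurable_fst.prodMk (measurable_snd.sub measurable_fst))).mul
      ((continuous_gaussDensity σ).measurable.comp (measurable_snd.sub measurable_fst))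
  have hint2 : Integrable (fun p : ℝ × ℝ => F p.1 p.2 * gaussDensity σ p.2) (ν.prod volume) := by
    rw [prod_gaussianReal hσ ν] at hint
    have h' := (integrable_withDensity_iff ((measurable_gaussianPDF 0 _).comp measurable_snd)
      (ae_of_all _ fun p => ENNReal.ofReal_lt_top)).mp hint
    have he : (fun p : ℝ × ℝ =>
          Function.uncurry F p * ((gaussianPDF 0 (σ ^ 2).toNNReal ∘ Prod.snd) p).toReal)
        = fun p : ℝ × ℝ => F p.1 p.2 * gaussDensity σ p.2 := by
      funext p
      rw [Function.comp_apply, show Function.uncurry F p = F p.1 p.2 from rfl, gaussianPDF,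
        ENNReal.toReal_ofReal (gaussianPDFReal_nonneg 0 _ _), gaussDensity_eq_pdf hσ]
    rwa [he] at h'
  have hcomp : Integrable ((fun p : ℝ × ℝ => F p.1 (p.2 - p.1) * gaussDensity σ (p.2 - p.1))
      ∘ (fun z : ℝ × ℝ => (z.1, z.1 + z.2))) (ν.prod volume) := by
    have he : ((fun p : ℝ × ℝ => F p.1 (p.2 - p.1) * gaussDensity σ (p.2 - p.1))
        ∘ (fun z : ℝ × ℝ => (z.1, z.1 + z.2)))
        = fun p : ℝ × ℝ => F p.1 p.2 * gaussDensity σ p.2 := by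
      funext z; simp [add_sub_cancel_left]
    rw [he]; exact hint2
  have hint3 : Integrable (fun p : ℝ × ℝ => F p.1 (p.2 - p.1) * gaussDensity σ (p.2 - p.1))
      (ν.prod volume) := (hS.integrable_comp hGmeas.aestronglyMeasurable).mp hcomp
  exact MeasureTheory.integral_integral_swap hint3

lemma integrable_sq_exp {σ : ℝ} (hσ : 0 < σ) :
    Integrable (fun x : ℝ => x ^ 2 * Real.exp (-(2 * σ ^ 2)⁻¹ * x ^ 2)) := by
  have hb : (0:ℝ) < (2 * σ ^ 2)⁻¹ := by positivity
  have h := integrable_rpow_mul_exp_neg_mul_sq hb (s := 2) (by norm_num)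
  have he : (fun x : ℝ => x ^ (2:ℝ) * Real.exp (-(2 * σ ^ 2)⁻¹ * x ^ 2))
      = fun x : ℝ => x ^ 2 * Real.exp (-(2 * σ ^ 2)⁻¹ * x ^ 2) := by
    funext x
    rw [show (2:ℝ) = ((2:ℕ):ℝ) by norm_num, Real.rpow_natCast]
  rwa [he] at h

lemma exp_form {σ : ℝ} (x : ℝ) :
    Real.exp (-x ^ 2 / (2 * σ ^ 2)) = Real.exp (-(2 * σ ^ 2)⁻¹ * x ^ 2) := by
  congr 1; field_simp

lemma integral_sq_exp {σ : ℝ} (hσ : 0 < σ) :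
    ∫ x : ℝ, x * (x * Real.exp (-(2 * σ ^ 2)⁻¹ * x ^ 2))
      = σ ^ 2 * Real.sqrt (2 * Real.pi * σ ^ 2) := by
  set b : ℝ := (2 * σ ^ 2)⁻¹ with hbdef
  have hb : (0:ℝ) < b := by positivity
  have hu : ∀ x : ℝ, HasDerivAt (fun x : ℝ => x) 1 x := fun x => hasDerivAt_id x
  have hv : ∀ x : ℝ, HasDerivAt (fun x : ℝ => -σ ^ 2 * Real.exp (-b * x ^ 2))
      (x * Real.exp (-b * x ^ 2)) x := by
    intro x
    have h1 : HasDerivAt (fun x : ℝ => -b * x ^ 2) (-b * (2 * x)) x := by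
      simpa using ((hasDerivAt_pow 2 x).const_mul (-b))
    have h2 := (h1.exp).const_mul (-σ ^ 2 : ℝ)
    refine h2.congr_deriv ?_
    rw [hbdef]
    field_simp
  have huv' : Integrable ((fun x : ℝ => x) * fun x => x * Real.exp (-b * x ^ 2)) := by
    have e : ((fun x : ℝ => x) * fun x => x * Real.exp (-b * x ^ 2))
        = fun x : ℝ => x ^ 2 * Real.exp (-b * x ^ 2) := by
      funext x; simp [Pi.mul_apply]; ring
    rw [e]; exact integrable_sq_exp hσ
  have hu'v : Integrable ((fun _ : ℝ => (1:ℝ)) * fun x => -σ ^ 2 * Real.exp (-b * x ^ 2)) := by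
    have e : ((fun _ : ℝ => (1:ℝ)) * fun x => -σ ^ 2 * Real.exp (-b * x ^ 2))
        = fun x : ℝ => -σ ^ 2 * Real.exp (-b * x ^ 2) := by
      funext x; simp [Pi.mul_apply]
    rw [e]; exact (integrable_exp_neg_mul_sq hb).const_mul _
  have huv : Integrable ((fun x : ℝ => x) * fun x => -σ ^ 2 * Real.exp (-b * x ^ 2)) := by
    have e : ((fun x : ℝ => x) * fun x => -σ ^ 2 * Real.exp (-b * x ^ 2))
        = fun x : ℝ => -σ ^ 2 * (x * Real.exp (-b * x ^ 2)) := by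
      funext x; simp [Pi.mul_apply]; ring
    rw [e]; exact (integrable_mul_exp_neg_mul_sq hb).const_mul _
  have key := integral_mul_deriv_eq_deriv_mul_of_integrable (fun x _ => hu x) (fun x _ => hv x) huv' hu'v huv
  rw [key]
  simp_rw [one_mul]
  rw [integral_const_mul, integral_gaussian]
  have hs : Real.sqrt (Real.pi / b) = Real.sqrt (2 * Real.pi * σ ^ 2) := by
    congr 1
    rw [hbdef]
    field_simp
  rw [hs]
  ring

lemma integrable_sq_gaussian {σ : ℝ} (hσ : 0 < σ) :
    Integrable (fun x : ℝ => x ^ 2) (gaussianReal 0 (σ ^ 2).toNNReal) := by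
  have hV : (σ ^ 2).toNNReal ≠ 0 := (Real.toNNReal_pos.mpr (by positivity)).ne'
  rw [gaussianReal_of_var_ne_zero 0 hV]
  refine (integrable_withDensity_iff (measurable_gaussianPDF 0 _)
    (ae_of_all _ fun _ => ENNReal.ofReal_lt_top)).mpr ?_
  have e : (fun x : ℝ => x ^ 2 * (gaussianPDF 0 (σ ^ 2).toNNReal x).toReal)
      = fun x : ℝ => (Real.sqrt (2 * Real.pi * σ ^ 2))⁻¹
          * (x ^ 2 * Real.exp (-(2 * σ ^ 2)⁻¹ * x ^ 2)) := by
    funext x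
    rw [gaussianPDF, ENNReal.toReal_ofReal (gaussianPDFReal_nonneg 0 _ _),
      ← gaussDensity_eq_pdf hσ]
    unfold gaussDensity
    rw [exp_form]
    ring
  rw [e]
  exact (integrable_sq_exp hσ).const_mul _

lemma integral_sq_gaussian {σ : ℝ} (hσ : 0 < σ) :
    ∫ x, x ^ 2 ∂(gaussianReal 0 (σ ^ 2).toNNReal) = σ ^ 2 := by
  rw [integral_gaussianReal_eq hσ (fun x => x ^ 2)
    ((continuous_pow 2).aestronglyMeasurable)]
  have e : (fun x : ℝ => x ^ 2 * gaussDensity σ x)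
      = fun x : ℝ => (Real.sqrt (2 * Real.pi * σ ^ 2))⁻¹
          * (x * (x * Real.exp (-(2 * σ ^ 2)⁻¹ * x ^ 2))) := by
    funext x
    unfold gaussDensity
    rw [exp_form]
    ring
  rw [e, integral_const_mul, integral_sq_exp hσ]
  have hpos : (0:ℝ) < Real.sqrt (2 * Real.pi * σ ^ 2) :=
    Real.sqrt_pos.mpr (by positivity)
  field_simp

/-- **Brown's identity.** If `Y = θ + ε` with `ε ~ N(0, σ²)` independent of `θ ~ G`, and `f`
is the marginal density of `Y`, then the Bayes risk of the posterior-mean estimator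
`δ(y) = y + σ² f'(y)/f(y)` equals `σ² − σ⁴ I(f)`, where `I(f) = ∫ f'(y)²/f(y) dy`. -/
theorem browns_identity
    {Ω : Type*} [MeasurableSpace Ω] (μ : Measure Ω) [IsProbabilityMeasure μ]
    (θ ε : Ω → ℝ) (hθ : Measurable θ) (hε : Measurable ε)
    (σ : ℝ) (hσ : 0 < σ)
    (hindep : IndepFun θ ε μ)
    (hlaw : μ.map ε = gaussianReal 0 (σ ^ 2).toNNReal)
    (hmom : Integrable (fun ω => (θ ω) ^ 2) μ)
    (f : ℝ → ℝ) (hf : ∀ y, f y = ∫ t, gaussDensity σ (y - t) ∂(μ.map θ))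
    (hfpos : ∀ y, 0 < f y) (hfdiff : Differentiable ℝ f)
    (δ : ℝ → ℝ) (hδ : ∀ y, δ y = y + σ ^ 2 * deriv f y / f y)
    (hrisk : Integrable (fun ω => (δ (θ ω + ε ω) - θ ω) ^ 2) μ)
    (hfisher : Integrable (fun y => (deriv f y) ^ 2 / f y)) :
    ∫ ω, (δ (θ ω + ε ω) - θ ω) ^ 2 ∂μ
      = σ ^ 2 - σ ^ 4 * ∫ y, (deriv f y) ^ 2 / f y := by

  have hσ2 : (σ:ℝ) ^ 2 ≠ 0 := by positivity
  set ν : Measure ℝ := μ.map θ with hν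
  haveI : IsProbabilityMeasure ν := Measure.isProbabilityMeasure_map hθ.aemeasurable
  set γ : Measure ℝ := gaussianReal 0 (σ ^ 2).toNNReal with hγdef
  set h : ℝ → ℝ := fun y => deriv f y / f y with hh
  have hfm : Measurable f := hfdiff.continuous.measurable
  have hhm : Measurable h := (measurable_deriv f).div hfm
  have key : ∀ ω, δ (θ ω + ε ω) - θ ω = ε ω + σ ^ 2 * h (θ ω + ε ω) := by
    intro ω
    rw [hδ]
    simp only [hh]
    ring
  have hmap : μ.map (fun ω => (θ ω, ε ω)) = ν.prod γ := by
    rw [← hlaw]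
    exact (indepFun_iff_map_prod_eq_prod_map_map hθ.aemeasurable hε.aemeasurable).mp hindep
  -- the derivative of the marginal density
  have hfd : ∀ y, deriv f y = ∫ t, -(y - t) / σ ^ 2 * gaussDensity σ (y - t) ∂ν := by
    intro y
    have H := hasDerivAt_marginal hσ ν y
    have e : (fun y => ∫ t, gaussDensity σ (y - t) ∂ν) = f := funext fun y => (hf y).symm
    rw [e] at H
    exact H.deriv
  have hfd2 : ∀ y, ∫ t, (y - t) * gaussDensity σ (y - t) ∂ν = -σ ^ 2 * deriv f y := by
    intro y
    rw [hfd y]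
    rw [show (fun t => -(y - t) / σ ^ 2 * gaussDensity σ (y - t))
        = fun t => (-σ ^ 2)⁻¹ * ((y - t) * gaussDensity σ (y - t)) from
      funext fun t => by field_simp]
    rw [integral_const_mul]
    field_simp
  -- integrability facts
  have hε2 : Integrable (fun ω => ε ω ^ 2) μ := by
    have h1 : Integrable (fun x : ℝ => x ^ 2) (μ.map ε) := by
      rw [hlaw]; exact integrable_sq_gaussian hσ
    exact (integrable_map_measure (continuous_pow 2).aestronglyMeasurable
      hε.aemeasurable).mp h1
  have hεL2 : MemLp ε 2 μ := (memLp_two_iff_integrable_sq hε.aestronglyMeasurable).mpr hε2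
  have hAe : (fun ω => δ (θ ω + ε ω) - θ ω) = fun ω => ε ω + σ ^ 2 * h (θ ω + ε ω) :=
    funext key
  have hAm : Measurable (fun ω => δ (θ ω + ε ω) - θ ω) := by
    rw [hAe]
    exact hε.add ((hhm.comp (hθ.add hε)).const_mul _)
  have hAL2 : MemLp (fun ω => δ (θ ω + ε ω) - θ ω) 2 μ :=
    (memLp_two_iff_integrable_sq hAm.aestronglyMeasurable).mpr hrisk
  have hHL2 : MemLp (fun ω => h (θ ω + ε ω)) 2 μ := by
    have h1 : MemLp (fun ω => (δ (θ ω + ε ω) - θ ω) - ε ω) 2 μ := hAL2.sub hεL2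
    have e : (fun ω => (δ (θ ω + ε ω) - θ ω) - ε ω) = fun ω => σ ^ 2 * h (θ ω + ε ω) :=
      funext fun ω => by rw [key ω]; ring
    rw [e] at h1
    have h2 := h1.const_mul ((σ ^ 2)⁻¹ : ℝ)
    have e2 : (fun ω => (σ ^ 2)⁻¹ * (σ ^ 2 * h (θ ω + ε ω))) = fun ω => h (θ ω + ε ω) :=
      funext fun ω => by field_simp
    rwa [e2] at h2
  have hH2 : Integrable (fun ω => h (θ ω + ε ω) ^ 2) μ :=
    (memLp_two_iff_integrable_sq hHL2.aestronglyMeasurable).mp hHL2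
  have hcross : Integrable (fun ω => ε ω * h (θ ω + ε ω)) μ := by
    have h1 : MemLp (ε • fun ω => h (θ ω + ε ω)) 1 μ :=
      hHL2.smul hεL2
    have e : (ε • fun ω => h (θ ω + ε ω)) = fun ω => ε ω * h (θ ω + ε ω) := by
      funext ω; simp [Pi.smul_apply', smul_eq_mul]
    rw [e] at h1
    exact memLp_one_iff_integrable.mp h1
  -- cross term via transfer
  have hpairm : AEMeasurable (fun ω => (θ ω, ε ω)) μ := (hθ.prodMk hε).aemeasurable
  have hhc : Measurable (Function.uncurry fun t x => x * h (t + x)) := by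
    have : Measurable (fun p : ℝ × ℝ => p.2 * h (p.1 + p.2)) :=
      measurable_snd.mul (hhm.comp (measurable_fst.add measurable_snd))
    exact this
  have hint2 : Integrable (Function.uncurry fun t x => x * h (t + x)) (ν.prod γ) := by
    rw [← hmap]
    exact (integrable_map_measure hhc.aestronglyMeasurable hpairm).mpr hcross
  have T2 := transfer hσ ν (fun t x => x * h (t + x)) hhc hint2
  have T2L : ∫ ω, ε ω * h (θ ω + ε ω) ∂μ
      = ∫ p : ℝ × ℝ, p.2 * h (p.1 + p.2) ∂(ν.prod γ) := by
    rw [← hmap]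
    exact (integral_map hpairm
      (measurable_snd.mul (hhm.comp (measurable_fst.add measurable_snd))).aestronglyMeasurable).symm
  have T2R : ∫ y, ∫ t, (y - t) * h (t + (y - t)) * gaussDensity σ (y - t) ∂ν
      = -σ ^ 2 * ∫ y, deriv f y ^ 2 / f y := by
    have e1 : ∀ y, ∫ t, (y - t) * h (t + (y - t)) * gaussDensity σ (y - t) ∂ν
        = h y * (-σ ^ 2 * deriv f y) := by
      intro y
      rw [show (fun t => (y - t) * h (t + (y - t)) * gaussDensity σ (y - t))
          = fun t => h y * ((y - t) * gaussDensity σ (y - t)) from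
        funext fun t => by rw [show t + (y - t) = y by ring]; ring]
      rw [integral_const_mul, hfd2 y]
    rw [funext e1]
    rw [show (fun y => h y * (-σ ^ 2 * deriv f y))
        = fun y => -σ ^ 2 * (deriv f y ^ 2 / f y) from
      funext fun y => by simp only [hh]; field_simp [(hfpos y).ne']]
    exact integral_const_mul _ _
  have cross_val : ∫ ω, ε ω * h (θ ω + ε ω) ∂μ
      = -σ ^ 2 * ∫ y, deriv f y ^ 2 / f y := by
    rw [T2L, T2, T2R]
  -- quadratic term via transfer
  have hhq : Measurable (Function.uncurry fun t x => h (t + x) ^ 2) := by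
    have : Measurable (fun p : ℝ × ℝ => h (p.1 + p.2) ^ 2) :=
      (hhm.comp (measurable_fst.add measurable_snd)).pow_const 2
    exact this
  have hint1 : Integrable (Function.uncurry fun t x => h (t + x) ^ 2) (ν.prod γ) := by
    rw [← hmap]
    exact (integrable_map_measure hhq.aestronglyMeasurable hpairm).mpr hH2
  have T1 := transfer hσ ν (fun t x => h (t + x) ^ 2) hhq hint1
  have T1L : ∫ ω, h (θ ω + ε ω) ^ 2 ∂μ
      = ∫ p : ℝ × ℝ, h (p.1 + p.2) ^ 2 ∂(ν.prod γ) := by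
    rw [← hmap]
    exact (integral_map hpairm
      ((hhm.comp (measurable_fst.add measurable_snd)).pow_const 2).aestronglyMeasurable).symm
  have T1R : ∫ y, ∫ t, h (t + (y - t)) ^ 2 * gaussDensity σ (y - t) ∂ν
      = ∫ y, deriv f y ^ 2 / f y := by
    have e1 : ∀ y, ∫ t, h (t + (y - t)) ^ 2 * gaussDensity σ (y - t) ∂ν
        = h y ^ 2 * f y := by
      intro y
      rw [show (fun t => h (t + (y - t)) ^ 2 * gaussDensity σ (y - t))
          = fun t => h y ^ 2 * gaussDensity σ (y - t) from
        funext fun t => by rw [show t + (y - t) = y by ring]]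
      rw [integral_const_mul, ← hf y]
    rw [funext e1]
    congr 1
    funext y
    simp only [hh]
    field_simp [(hfpos y).ne']
  have sq_val : ∫ ω, h (θ ω + ε ω) ^ 2 ∂μ = ∫ y, deriv f y ^ 2 / f y := by
    rw [T1L, T1, T1R]
  -- second moment of ε
  have eps_val : ∫ ω, ε ω ^ 2 ∂μ = σ ^ 2 := by
    have e : ∫ x, x ^ 2 ∂(μ.map ε) = ∫ ω, ε ω ^ 2 ∂μ :=
      integral_map hε.aemeasurable (continuous_pow 2).aestronglyMeasurable
    rw [← e, hlaw]
    exact integral_sq_gaussian hσ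
  -- assemble
  have expand : (fun ω => (δ (θ ω + ε ω) - θ ω) ^ 2)
      = fun ω => ε ω ^ 2 + ((2 * σ ^ 2) * (ε ω * h (θ ω + ε ω))
          + σ ^ 4 * h (θ ω + ε ω) ^ 2) :=
    funext fun ω => by rw [key ω]; ring
  have hsum1 : Integrable
      (fun ω => 2 * σ ^ 2 * (ε ω * h (θ ω + ε ω)) + σ ^ 4 * h (θ ω + ε ω) ^ 2) μ :=
    (hcross.const_mul (2 * σ ^ 2)).add (hH2.const_mul (σ ^ 4))
  rw [expand,
    integral_add hε2 hsum1,
    integral_add (hcross.const_mul (2 * σ ^ 2)) (hH2.const_mul (σ ^ 4)),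
    integral_const_mul, integral_const_mul,
    eps_val, cross_val, sq_val]
  ring
end

section
/- Uncorrelated noise-splitting pair: let Y, η be independent random variables with η ~ N(0, σ²), and let α > 0. Define U = Y + αη and V = Y − η/α. Then Cov(U, V) = Var(Y) − σ², so in particular if Y = θ + ε with ε ~ N(0, σ²) independent of θ (θ deterministic), then Cov(U, V) = 0, and E[(δ(U) − V)²] = E[(δ(U) − θ)²] + σ²(1 + 1/α²) for any measurable function δ of U. -/
open Real MeasureTheory ProbabilityTheory Filter
open scoped NNReal ENNReal

namespace NSP


lemma integral_id_mul_exp {b : ℝ} (hb : 0 < b) :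
    ∫ x : ℝ, x * Real.exp (-b * x ^ 2) = 0 := by
  have h : ∫ x : ℝ, -(x * Real.exp (-b * x ^ 2)) = ∫ x : ℝ, x * Real.exp (-b * x ^ 2) := by
    have h0 := integral_neg_eq_self (fun x : ℝ => x * Real.exp (-b * x ^ 2)) (volume : Measure ℝ)
    rw [← h0]
    congr 1; funext x; rw [neg_sq]; ring
  rw [integral_neg] at h
  linarith

lemma integral_sq_mul_exp {b : ℝ} (hb : 0 < b) :
    ∫ x : ℝ, x ^ 2 * Real.exp (-b * x ^ 2) = Real.sqrt (π / b) / (2 * b) := by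
  have hsq : Integrable (fun x : ℝ => x ^ 2 * Real.exp (-b * x ^ 2)) := by
    have := integrable_rpow_mul_exp_neg_mul_sq hb (s := 2) (by norm_num)
    simpa [Real.rpow_two] using this
  have hu : ∀ x : ℝ, HasDerivAt (fun y : ℝ => y) 1 x := fun x => hasDerivAt_id x
  have hv : ∀ x : ℝ, HasDerivAt (fun y : ℝ => -(2 * b)⁻¹ * Real.exp (-b * y ^ 2))
      (x * Real.exp (-b * x ^ 2)) x := by
    intro x
    have h1 : HasDerivAt (fun y : ℝ => -b * y ^ 2) (-b * (2 * x)) x := by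
      simpa using ((hasDerivAt_pow 2 x).const_mul (-b))
    have h2 := (h1.exp).const_mul (-(2 * b)⁻¹)
    refine h2.congr_deriv ?_
    field_simp
  have e1 : ((fun y : ℝ => y) * fun x : ℝ => x * Real.exp (-b * x ^ 2))
      = fun x : ℝ => x ^ 2 * Real.exp (-b * x ^ 2) := by
    funext x; simp only [Pi.mul_apply]; ring
  have e2 : ((fun _ : ℝ => (1 : ℝ)) * fun y : ℝ => -(2 * b)⁻¹ * Real.exp (-b * y ^ 2))
      = fun x : ℝ => -(2 * b)⁻¹ * Real.exp (-b * x ^ 2) := by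
    funext x; simp only [Pi.mul_apply]; ring
  have e3 : ((fun y : ℝ => y) * fun y : ℝ => -(2 * b)⁻¹ * Real.exp (-b * y ^ 2))
      = fun x : ℝ => -(2 * b)⁻¹ * (x * Real.exp (-b * x ^ 2)) := by
    funext x; simp only [Pi.mul_apply]; ring
  have key := integral_mul_deriv_eq_deriv_mul_of_integrable (fun x _ => hu x) (fun x _ => hv x)
    (by rw [e1]; exact hsq)
    (by rw [e2]; exact (integrable_exp_neg_mul_sq hb).const_mul _)
    (by rw [e3]; exact (integrable_mul_exp_neg_mul_sq hb).const_mul _)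
  have lhs : ∫ x : ℝ, x ^ 2 * Real.exp (-b * x ^ 2)
      = ∫ x : ℝ, (fun y : ℝ => y) x * (x * Real.exp (-b * x ^ 2)) := by
    congr 1; funext x; ring
  rw [lhs, key]
  have : ∫ x : ℝ, (fun _ : ℝ => (1:ℝ)) x * (-(2 * b)⁻¹ * Real.exp (-b * x ^ 2))
      = -(2 * b)⁻¹ * Real.sqrt (π / b) := by
    simp only [one_mul]
    rw [MeasureTheory.integral_const_mul, integral_gaussian]
  rw [this]
  ring

lemma gaussian_pdf_coe (v : ℝ≥0) :
    gaussianPDF 0 v = (fun x => ((gaussianPDFReal 0 v x).toNNReal : ℝ≥0∞)) := rfl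

lemma gaussian_integral_eq (v : ℝ≥0) (hv : v ≠ 0) (f : ℝ → ℝ) :
    ∫ x, f x ∂(gaussianReal 0 v) = ∫ x, gaussianPDFReal 0 v x * f x := by
  rw [gaussianReal_of_var_ne_zero _ hv, gaussian_pdf_coe,
    integral_withDensity_eq_integral_smul ((measurable_gaussianPDFReal 0 v).real_toNNReal) f]
  congr 1; funext x
  rw [NNReal.smul_def, Real.coe_toNNReal _ (gaussianPDFReal_nonneg 0 v x)]
  rfl

lemma gaussian_integrable_iff (v : ℝ≥0) (hv : v ≠ 0) {f : ℝ → ℝ} :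
    Integrable f (gaussianReal 0 v) ↔
      Integrable (fun x => gaussianPDFReal 0 v x * f x) volume := by
  rw [gaussianReal_of_var_ne_zero _ hv, gaussian_pdf_coe,
    integrable_withDensity_iff_integrable_smul ((measurable_gaussianPDFReal 0 v).real_toNNReal)]
  constructor <;> intro h <;> refine h.congr (Filter.Eventually.of_forall fun x => ?_) <;>
    simp only [NNReal.smul_def, Real.coe_toNNReal _ (gaussianPDFReal_nonneg 0 v x)] <;> rfl

lemma gaussian_pdf_eq {c : ℝ} (hc : 0 < c) (x : ℝ) :
    gaussianPDFReal 0 c.toNNReal x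
      = (Real.sqrt (2 * π * c))⁻¹ * Real.exp (-(2 * c)⁻¹ * x ^ 2) := by
  rw [gaussianPDFReal]
  rw [Real.coe_toNNReal _ hc.le]
  congr 1
  rw [sub_zero]
  ring_nf


lemma sqrt_two_pi_pos {c : ℝ} (hc : 0 < c) : 0 < Real.sqrt (2 * π * c) :=
  Real.sqrt_pos.mpr (by positivity)

lemma integral_id_gaussian {c : ℝ} (hc : 0 < c) :
    ∫ x, x ∂(gaussianReal 0 c.toNNReal) = 0 := by
  have hv : (c.toNNReal : ℝ≥0) ≠ 0 := by
    simp [Real.toNNReal_eq_zero, not_le, hc]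
  rw [gaussian_integral_eq _ hv (fun x => x)]
  have : ∀ x : ℝ, gaussianPDFReal 0 c.toNNReal x * x
      = (Real.sqrt (2 * π * c))⁻¹ * (x * Real.exp (-(2 * c)⁻¹ * x ^ 2)) := by
    intro x; rw [gaussian_pdf_eq hc]; ring
  simp only [this]
  rw [MeasureTheory.integral_const_mul, integral_id_mul_exp (by positivity), mul_zero]

lemma integral_sq_gaussian {c : ℝ} (hc : 0 < c) :
    ∫ x, x ^ 2 ∂(gaussianReal 0 c.toNNReal) = c := by
  have hv : (c.toNNReal : ℝ≥0) ≠ 0 := by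
    simp [Real.toNNReal_eq_zero, not_le, hc]
  rw [gaussian_integral_eq _ hv (fun x => x ^ 2)]
  have : ∀ x : ℝ, gaussianPDFReal 0 c.toNNReal x * x ^ 2
      = (Real.sqrt (2 * π * c))⁻¹ * (x ^ 2 * Real.exp (-(2 * c)⁻¹ * x ^ 2)) := by
    intro x; rw [gaussian_pdf_eq hc]; ring
  simp only [this]
  rw [MeasureTheory.integral_const_mul, integral_sq_mul_exp (by positivity)]
  have h1 : π / (2 * c)⁻¹ = 2 * π * c := by field_simp
  rw [h1]
  have h2 : (2 * (2 * c)⁻¹) = c⁻¹ := by field_simp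
  rw [h2]
  rw [div_inv_eq_mul, ← mul_assoc, inv_mul_cancel₀ (sqrt_two_pi_pos hc).ne', one_mul]

lemma integrable_id_gaussian {c : ℝ} (hc : 0 < c) :
    Integrable (fun x => x) (gaussianReal 0 c.toNNReal) := by
  have hv : (c.toNNReal : ℝ≥0) ≠ 0 := by
    simp [Real.toNNReal_eq_zero, not_le, hc]
  rw [gaussian_integrable_iff _ hv]
  have : (fun x : ℝ => gaussianPDFReal 0 c.toNNReal x * x)
      = fun x : ℝ => (Real.sqrt (2 * π * c))⁻¹ * (x * Real.exp (-(2 * c)⁻¹ * x ^ 2)) := by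
    funext x; rw [gaussian_pdf_eq hc]; ring
  rw [this]
  exact (integrable_mul_exp_neg_mul_sq (by positivity)).const_mul _

lemma integrable_sq_gaussian {c : ℝ} (hc : 0 < c) :
    Integrable (fun x => x ^ 2) (gaussianReal 0 c.toNNReal) := by
  have hv : (c.toNNReal : ℝ≥0) ≠ 0 := by
    simp [Real.toNNReal_eq_zero, not_le, hc]
  rw [gaussian_integrable_iff _ hv]
  have : (fun x : ℝ => gaussianPDFReal 0 c.toNNReal x * x ^ 2)
      = fun x : ℝ => (Real.sqrt (2 * π * c))⁻¹ * (x ^ 2 * Real.exp (-(2 * c)⁻¹ * x ^ 2)) := by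
    funext x; rw [gaussian_pdf_eq hc]; ring
  rw [this]
  refine Integrable.const_mul ?_ _
  have := integrable_rpow_mul_exp_neg_mul_sq (by positivity : (0:ℝ) < (2*c)⁻¹) (s := 2) (by norm_num)
  simpa [Real.rpow_two] using this

lemma memLp_id_gaussian {c : ℝ} (hc : 0 < c) :
    MemLp (fun x : ℝ => x) 2 (gaussianReal 0 c.toNNReal) := by
  have := (memLp_two_iff_integrable_sq
    (aestronglyMeasurable_id (α := ℝ) (μ := gaussianReal 0 c.toNNReal))).mpr
    (integrable_sq_gaussian hc)
  exact this



lemma gaussian_prod_eq (v : ℝ≥0) (hv : v ≠ 0) :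
    (gaussianReal 0 v).prod (gaussianReal 0 v)
      = ((volume : Measure ℝ).prod volume).withDensity
          (fun p => gaussianPDF 0 v p.1 * gaussianPDF 0 v p.2) := by
  refine Measure.prod_eq fun s t hs ht => ?_
  rw [withDensity_apply _ (hs.prod ht), ← Measure.prod_restrict,
    lintegral_prod_mul (measurable_gaussianPDF 0 v).aemeasurable
      (measurable_gaussianPDF 0 v).aemeasurable,
    gaussianReal_of_var_ne_zero _ hv, withDensity_apply _ hs, withDensity_apply _ ht]

lemma shear_mp (α : ℝ) :
    MeasurePreserving (fun p : ℝ × ℝ => (p.1 - α * p.2, p.2))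
      ((volume : Measure ℝ).prod volume) ((volume : Measure ℝ).prod volume) := by
  have hmeas : Measurable (fun p : ℝ × ℝ => (p.1 - α * p.2, p.2)) :=
    (measurable_fst.sub (measurable_snd.const_mul α)).prodMk measurable_snd
  refine ⟨hmeas, ?_⟩
  refine (Measure.prod_eq fun s t hs ht => ?_).symm
  rw [Measure.map_apply hmeas (hs.prod ht)]
  have hset : (fun p : ℝ × ℝ => (p.1 - α * p.2, p.2)) ⁻¹' (s ×ˢ t)
      = {p : ℝ × ℝ | p.1 - α * p.2 ∈ s ∧ p.2 ∈ t} := rfl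
  have hsetm : MeasurableSet {p : ℝ × ℝ | p.1 - α * p.2 ∈ s ∧ p.2 ∈ t} := by
    rw [← hset]; exact hmeas (hs.prod ht)
  rw [hset, Measure.prod_apply_symm hsetm]
  have hsec : ∀ y : ℝ, (volume : Measure ℝ)
      ((fun x : ℝ => (x, y)) ⁻¹' {p : ℝ × ℝ | p.1 - α * p.2 ∈ s ∧ p.2 ∈ t})
      = t.indicator (fun _ => volume s) y := by
    intro y
    by_cases hy : y ∈ t
    · have h1 : (fun x : ℝ => (x, y)) ⁻¹' {p : ℝ × ℝ | p.1 - α * p.2 ∈ s ∧ p.2 ∈ t}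
          = (fun x : ℝ => x + -(α * y)) ⁻¹' s := by
        ext x; simp [hy, sub_eq_add_neg]
      rw [h1, measure_preimage_add_right, Set.indicator_of_mem hy]
    · have h1 : (fun x : ℝ => (x, y)) ⁻¹' {p : ℝ × ℝ | p.1 - α * p.2 ∈ s ∧ p.2 ∈ t}
          = (∅ : Set ℝ) := by
        ext x; simp [hy]
      rw [h1, Set.indicator_of_notMem hy]
      simp
  simp_rw [hsec]
  rw [lintegral_indicator ht, setLIntegral_const, mul_comm]

lemma shear_swap_mp (α : ℝ) :
    MeasurePreserving (fun p : ℝ × ℝ => (p.2 - α * p.1, p.1))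
      ((volume : Measure ℝ).prod volume) ((volume : Measure ℝ).prod volume) :=
  (shear_mp α).comp (Measure.measurePreserving_swap (μ := (volume : Measure ℝ)) (ν := (volume : Measure ℝ)))

lemma key_inner {c α : ℝ} (hc : 0 < c) (hα : 0 < α) (u : ℝ) :
    ∫ y : ℝ, (u - (α + 1/α) * y) *
      (gaussianPDFReal 0 c.toNNReal (u - α * y) * gaussianPDFReal 0 c.toNNReal y) = 0 := by
  have hαne : α ≠ 0 := hα.ne'
  set A : ℝ := (Real.sqrt (2 * π * c))⁻¹ with hA
  set b : ℝ := (2 * c)⁻¹ with hb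
  have hbpos : 0 < b := by rw [hb]; positivity
  set c₁ : ℝ := 1 + α ^ 2 with hc₁
  have hc₁pos : 0 < c₁ := by rw [hc₁]; positivity
  set m : ℝ := α * u / c₁ with hm
  set β : ℝ := b * c₁ with hβ
  have hβpos : 0 < β := mul_pos hbpos hc₁pos
  set K : ℝ := -(α + 1/α) * (A ^ 2 * Real.exp (-b * u ^ 2 / c₁)) with hK
  have hpt : ∀ y : ℝ, (u - (α + 1/α) * y) *
      (gaussianPDFReal 0 c.toNNReal (u - α * y) * gaussianPDFReal 0 c.toNNReal y)
      = K * ((y - m) * Real.exp (-β * (y - m) ^ 2)) := by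
    intro y
    rw [gaussian_pdf_eq hc, gaussian_pdf_eq hc]
    have hexp : Real.exp (-b * (u - α * y) ^ 2) * Real.exp (-b * y ^ 2)
        = Real.exp (-b * u ^ 2 / c₁) * Real.exp (-β * (y - m) ^ 2) := by
      rw [← Real.exp_add, ← Real.exp_add]
      congr 1
      rw [hβ, hm, hb, hc₁]
      field_simp
      ring
    have hcoef : u - (α + 1/α) * y = -(α + 1/α) * (y - m) := by
      rw [hm, hc₁]
      field_simp
      ring
    calc (u - (α + 1/α) * y) * (A * Real.exp (-b * (u - α * y) ^ 2) * (A * Real.exp (-b * y ^ 2)))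
        = (u - (α + 1/α) * y) * A ^ 2 *
            (Real.exp (-b * (u - α * y) ^ 2) * Real.exp (-b * y ^ 2)) := by ring
      _ = (-(α + 1/α) * (y - m)) * A ^ 2 *
            (Real.exp (-b * u ^ 2 / c₁) * Real.exp (-β * (y - m) ^ 2)) := by
          rw [hexp, hcoef]
      _ = K * ((y - m) * Real.exp (-β * (y - m) ^ 2)) := by rw [hK]; ring
  simp only [hpt]
  rw [MeasureTheory.integral_const_mul]
  have htrans := integral_add_right_eq_self (μ := (volume : Measure ℝ))
    (fun z : ℝ => z * Real.exp (-β * z ^ 2)) (-m)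
  simp only [← sub_eq_add_neg] at htrans
  rw [htrans, integral_id_mul_exp hβpos, mul_zero]


lemma integrable_mul_sq {Ω : Type*} [MeasurableSpace Ω] {μ : Measure Ω} {f g : Ω → ℝ}
    (hf : AEStronglyMeasurable f μ) (hg : AEStronglyMeasurable g μ)
    (hf2 : Integrable (fun ω => f ω ^ 2) μ) (hg2 : Integrable (fun ω => g ω ^ 2) μ) :
    Integrable (fun ω => f ω * g ω) μ := by
  refine Integrable.mono' (((hf2.add hg2).const_mul (1/2 : ℝ))) (hf.mul hg)
    (Filter.Eventually.of_forall fun ω => ?_)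
  have h1 : ‖f ω * g ω‖ = |f ω| * |g ω| := by rw [norm_mul]; rfl
  rw [h1]
  simp only [Pi.add_apply]
  nlinarith [sq_nonneg (|f ω| - |g ω|), sq_abs (f ω), sq_abs (g ω), abs_nonneg (f ω),
    abs_nonneg (g ω)]

lemma cross_zero {Ω : Type*} [MeasurableSpace Ω] {μ : Measure Ω} [IsProbabilityMeasure μ]
    {c α : ℝ} (hc : 0 < c) (hα : 0 < α)
    {ε η : Ω → ℝ} (hεm : Measurable ε) (hηm : Measurable η)
    (hindep : IndepFun ε η μ)
    (hεlaw : μ.map ε = gaussianReal 0 c.toNNReal)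
    (hηlaw : μ.map η = gaussianReal 0 c.toNNReal)
    {f : ℝ → ℝ} (hf : Measurable f) (θ : ℝ)
    (hInt : Integrable (fun ω => f (θ + ε ω + α * η ω) * (ε ω - η ω / α)) μ) :
    ∫ ω, f (θ + ε ω + α * η ω) * (ε ω - η ω / α) ∂μ = 0 := by
  have hαne : α ≠ 0 := hα.ne'
  have hv : (c.toNNReal : ℝ≥0) ≠ 0 := by
    simp [Real.toNNReal_eq_zero, not_le, hc]
  set v : ℝ≥0 := c.toNNReal with hvdef
  set γ : Measure ℝ := gaussianReal 0 v with hγ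
  set g : ℝ → ℝ := gaussianPDFReal 0 v with hg
  set F : ℝ × ℝ → ℝ := fun p => f (θ + p.1 + α * p.2) * (p.1 - p.2 / α) with hF
  have hFm : Measurable F := by
    apply Measurable.mul
    · exact hf.comp ((measurable_const.add measurable_fst).add (measurable_snd.const_mul α))
    · exact measurable_fst.sub (measurable_snd.div_const α)
  have hpairm : Measurable (fun ω => (ε ω, η ω)) := hεm.prodMk hηm
  have hpair : μ.map (fun ω => (ε ω, η ω)) = γ.prod γ := by
    rw [(indepFun_iff_map_prod_eq_prod_map_map hεm.aemeasurable hηm.aemeasurable).mp hindep,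
      hεlaw, hηlaw]
  have step1 : ∫ ω, f (θ + ε ω + α * η ω) * (ε ω - η ω / α) ∂μ = ∫ p, F p ∂(γ.prod γ) := by
    rw [← hpair, integral_map hpairm.aemeasurable hFm.aestronglyMeasurable]
  have IF : Integrable F (γ.prod γ) := by
    rw [← hpair]
    exact (integrable_map_measure hFm.aestronglyMeasurable hpairm.aemeasurable).mpr hInt
  rw [step1, integral_prod_symm F IF]
  -- inner substitution
  have hinner : ∀ y : ℝ, ∫ x, F (x, y) ∂γ = ∫ u, g (u - α * y) * F (u - α * y, y) := by
    intro y
    rw [hγ, gaussian_integral_eq v hv (fun x => F (x, y))]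
    have htrans := integral_add_right_eq_self (μ := (volume : Measure ℝ))
      (fun u => g u * F (u, y)) (-(α * y))
    simp only [← sub_eq_add_neg] at htrans
    exact htrans.symm
  simp_rw [hinner]
  rw [hγ, gaussian_integral_eq v hv]
  simp_rw [← MeasureTheory.integral_const_mul]
  -- swap
  have ID : Integrable (fun q : ℝ × ℝ => g q.2 * (g q.1 * F q))
      ((volume : Measure ℝ).prod volume) := by
    have IF' := IF
    rw [hγ, gaussian_prod_eq v hv] at IF'
    have hdens : (fun p : ℝ × ℝ => gaussianPDF 0 v p.1 * gaussianPDF 0 v p.2)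
        = fun p : ℝ × ℝ => (((g p.1).toNNReal * (g p.2).toNNReal : ℝ≥0) : ℝ≥0∞) := by
      funext p
      rw [ENNReal.coe_mul]
      rfl
    rw [hdens] at IF'
    have hdm : Measurable (fun p : ℝ × ℝ => ((g p.1).toNNReal * (g p.2).toNNReal : ℝ≥0)) :=
      (((measurable_gaussianPDFReal 0 v).comp measurable_fst).real_toNNReal).mul
        (((measurable_gaussianPDFReal 0 v).comp measurable_snd).real_toNNReal)
    have h2 : Integrable
        (fun p : ℝ × ℝ => ((g p.1).toNNReal * (g p.2).toNNReal : ℝ≥0) • F p)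
        ((volume : Measure ℝ).prod volume) :=
      (integrable_withDensity_iff_integrable_smul hdm).mp IF'
    refine h2.congr (Filter.Eventually.of_forall fun q => ?_)
    simp only [NNReal.smul_def, NNReal.coe_mul,
      Real.coe_toNNReal _ (gaussianPDFReal_nonneg 0 v _), smul_eq_mul]
    rw [Real.coe_toNNReal (g q.1) (gaussianPDFReal_nonneg 0 v q.1),
      Real.coe_toNNReal (g q.2) (gaussianPDFReal_nonneg 0 v q.2)]
    ring
  have hswap := MeasureTheory.integral_integral_swap
    (f := fun y u => g y * (g (u - α * y) * F (u - α * y, y)))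
    (μ := (volume : Measure ℝ)) (ν := (volume : Measure ℝ)) ?_
  rotate_left
  · have hcomp : Function.uncurry (fun y u => g y * (g (u - α * y) * F (u - α * y, y)))
        = (fun q : ℝ × ℝ => g q.2 * (g q.1 * F q)) ∘ (fun p : ℝ × ℝ => (p.2 - α * p.1, p.1)) := by
      funext p
      rfl
    rw [hcomp]
    exact ((shear_swap_mp α).integrable_comp
      (by exact (((measurable_gaussianPDFReal 0 v).comp measurable_snd).mul
        (((measurable_gaussianPDFReal 0 v).comp measurable_fst).mul hFm)).aestronglyMeasurable)).mpr ID
  rw [hswap]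
  -- inner y-integral vanishes
  have hzero : ∀ u : ℝ, ∫ y, g y * (g (u - α * y) * F (u - α * y, y)) = 0 := by
    intro u
    have hpt : ∀ y : ℝ, g y * (g (u - α * y) * F (u - α * y, y))
        = f (θ + u) * ((u - (α + 1/α) * y) * (g (u - α * y) * g y)) := by
      intro y
      rw [hF]
      simp only []
      rw [show θ + (u - α * y) + α * y = θ + u by ring]
      ring
    simp_rw [hpt]
    rw [MeasureTheory.integral_const_mul, hg, hvdef, key_inner hc hα u, mul_zero]
  simp_rw [hzero]
  exact integral_zero _ _

end NSP

open MeasureTheory ProbabilityTheory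

/-- **Uncorrelated noise-splitting pair.** Let `Y, η` be independent with `η ~ N(0, σ²)`,
`α > 0`, `U = Y + αη`, `V = Y − η/α`.  Then `Cov(U, V) = Var(Y) − σ²`; in particular if
`Y = θ + ε` with `θ` deterministic and `ε ~ N(0, σ²)`, then `Cov(U, V) = 0` and
`E[(δ(U) − V)²] = E[(δ(U) − θ)²] + σ²(1 + 1/α²)` for any measurable `δ`. -/
theorem noise_splitting_pair
    {Ω : Type*} [MeasurableSpace Ω] (μ : Measure Ω) [IsProbabilityMeasure μ]
    (θ σ α : ℝ) (hσ : 0 < σ) (hα : 0 < α)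
    (Y ε η : Ω → ℝ) (hεm : Measurable ε) (hηm : Measurable η)
    (hY : ∀ ω, Y ω = θ + ε ω)
    (hindep : IndepFun ε η μ)
    (hεlaw : μ.map ε = gaussianReal 0 (σ ^ 2).toNNReal)
    (hηlaw : μ.map η = gaussianReal 0 (σ ^ 2).toNNReal)
    (U V : Ω → ℝ)
    (hU : ∀ ω, U ω = Y ω + α * η ω)
    (hV : ∀ ω, V ω = Y ω - η ω / α)
    (δ : ℝ → ℝ) (hδ : Measurable δ)
    (hint₁ : Integrable (fun ω => (δ (U ω) - θ) ^ 2) μ)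
    (hint₂ : Integrable (fun ω => (δ (U ω) - V ω) ^ 2) μ) :
    ((∫ ω, U ω * V ω ∂μ) - (∫ ω, U ω ∂μ) * (∫ ω, V ω ∂μ) = variance Y μ - σ ^ 2)
    ∧ ((∫ ω, U ω * V ω ∂μ) - (∫ ω, U ω ∂μ) * (∫ ω, V ω ∂μ) = 0)
    ∧ (∫ ω, (δ (U ω) - V ω) ^ 2 ∂μ)
        = (∫ ω, (δ (U ω) - θ) ^ 2 ∂μ) + σ ^ 2 * (1 + 1 / α ^ 2) := by
  have hc : (0:ℝ) < σ ^ 2 := by positivity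
  have hαne : α ≠ 0 := hα.ne'
  -- moments of ε
  have Iε : Integrable ε μ := by
    have h := (integrable_map_measure measurable_id.aestronglyMeasurable
      hεm.aemeasurable).mp (by rw [hεlaw]; exact NSP.integrable_id_gaussian hc)
    exact h
  have Iη : Integrable η μ := by
    have h := (integrable_map_measure measurable_id.aestronglyMeasurable
      hηm.aemeasurable).mp (by rw [hηlaw]; exact NSP.integrable_id_gaussian hc)
    exact h
  have Iε2 : Integrable (fun ω => ε ω ^ 2) μ := by
    have h := (integrable_map_measure (measurable_id.pow_const 2).aestronglyMeasurable
      hεm.aemeasurable).mp (by rw [hεlaw]; exact NSP.integrable_sq_gaussian hc)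
    exact h
  have Iη2 : Integrable (fun ω => η ω ^ 2) μ := by
    have h := (integrable_map_measure (measurable_id.pow_const 2).aestronglyMeasurable
      hηm.aemeasurable).mp (by rw [hηlaw]; exact NSP.integrable_sq_gaussian hc)
    exact h
  have Eε : ∫ ω, ε ω ∂μ = 0 := by
    have h : ∫ x, x ∂(μ.map ε) = ∫ ω, ε ω ∂μ :=
      integral_map hεm.aemeasurable measurable_id.aestronglyMeasurable
    rw [← h, hεlaw, NSP.integral_id_gaussian hc]
  have Eη : ∫ ω, η ω ∂μ = 0 := by
    have h : ∫ x, x ∂(μ.map η) = ∫ ω, η ω ∂μ :=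
      integral_map hηm.aemeasurable measurable_id.aestronglyMeasurable
    rw [← h, hηlaw, NSP.integral_id_gaussian hc]
  have Eε2 : ∫ ω, ε ω ^ 2 ∂μ = σ ^ 2 := by
    have h : ∫ x, x ^ 2 ∂(μ.map ε) = ∫ ω, ε ω ^ 2 ∂μ :=
      integral_map hεm.aemeasurable (measurable_id.pow_const 2).aestronglyMeasurable
    rw [← h, hεlaw, NSP.integral_sq_gaussian hc]
  have Eη2 : ∫ ω, η ω ^ 2 ∂μ = σ ^ 2 := by
    have h : ∫ x, x ^ 2 ∂(μ.map η) = ∫ ω, η ω ^ 2 ∂μ :=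
      integral_map hηm.aemeasurable (measurable_id.pow_const 2).aestronglyMeasurable
    rw [← h, hηlaw, NSP.integral_sq_gaussian hc]
  have Iεη : Integrable (fun ω => ε ω * η ω) μ :=
    NSP.integrable_mul_sq hεm.aestronglyMeasurable hηm.aestronglyMeasurable Iε2 Iη2
  have Eεη : ∫ ω, ε ω * η ω ∂μ = 0 := by
    have h : ∫ ω, ε ω * η ω ∂μ = (∫ ω, ε ω ∂μ) * ∫ ω, η ω ∂μ :=
      hindep.integral_mul_eq_mul_integral hεm.aestronglyMeasurable hηm.aestronglyMeasurable
    rw [h, Eε, zero_mul]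
  have hUfun : U = fun ω => θ + ε ω + α * η ω := funext fun ω => by rw [hU ω, hY ω]
  have hVfun : V = fun ω => θ + (ε ω - η ω / α) := funext fun ω => by rw [hV ω, hY ω]; ring
  have hYfun : Y = fun ω => θ + ε ω := funext fun ω => hY ω
  -- expectations of U and V
  have EU : ∫ ω, U ω ∂μ = θ := by
    simp only [hUfun]
    have I1 : Integrable (fun ω => θ + ε ω) μ := (integrable_const θ).add Iε
    have I2 : Integrable (fun ω => α * η ω) μ := Iη.const_mul α
    rw [integral_add I1 I2, integral_add (integrable_const θ) Iε,
      MeasureTheory.integral_const_mul, integral_const, Eε, Eη]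
    simp
  have IW : Integrable (fun ω => ε ω - η ω / α) μ := Iε.sub (Iη.div_const α)
  have EW : ∫ ω, (ε ω - η ω / α) ∂μ = 0 := by
    rw [integral_sub Iε (Iη.div_const α), Eε, integral_div, Eη]
    simp
  have EV : ∫ ω, V ω ∂μ = θ := by
    simp only [hVfun]
    rw [integral_add (integrable_const θ) IW, integral_const, EW]
    simp
  -- E[UV]
  have EUV : ∫ ω, U ω * V ω ∂μ = θ ^ 2 := by
    have hsplit : (fun ω => U ω * V ω)
        = fun ω => (θ ^ 2 + (2 * θ) * ε ω + ε ω ^ 2)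
            + (((α - 1/α) * θ) * η ω + (α - 1/α) * (ε ω * η ω) - η ω ^ 2) := by
      funext ω
      rw [hU ω, hV ω, hY ω]
      field_simp
      ring
    have IA : Integrable (fun ω => θ ^ 2 + (2 * θ) * ε ω + ε ω ^ 2) μ :=
      ((integrable_const _).add (Iε.const_mul _)).add Iε2
    have IB : Integrable
        (fun ω => ((α - 1/α) * θ) * η ω + (α - 1/α) * (ε ω * η ω) - η ω ^ 2) μ :=
      ((Iη.const_mul _).add (Iεη.const_mul _)).sub Iη2
    rw [hsplit, integral_add IA IB]
    have hA : ∫ ω, (θ ^ 2 + (2 * θ) * ε ω + ε ω ^ 2) ∂μ = θ ^ 2 + σ ^ 2 := by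
      have I1 : Integrable (fun ω => θ ^ 2 + (2 * θ) * ε ω) μ :=
        (integrable_const _).add (Iε.const_mul _)
      have I2 : Integrable (fun ω => (2 * θ) * ε ω) μ := Iε.const_mul _
      rw [integral_add I1 Iε2, integral_add (integrable_const _) I2,
        MeasureTheory.integral_const_mul, integral_const, Eε, Eε2]
      simp
    have hB : ∫ ω, (((α - 1/α) * θ) * η ω + (α - 1/α) * (ε ω * η ω) - η ω ^ 2) ∂μ
        = -σ ^ 2 := by
      have I1 : Integrable (fun ω => ((α - 1/α) * θ) * η ω + (α - 1/α) * (ε ω * η ω)) μ :=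
        (Iη.const_mul _).add (Iεη.const_mul _)
      have I2 : Integrable (fun ω => ((α - 1/α) * θ) * η ω) μ := Iη.const_mul _
      have I3 : Integrable (fun ω => (α - 1/α) * (ε ω * η ω)) μ := Iεη.const_mul _
      rw [integral_sub I1 Iη2, integral_add I2 I3,
        MeasureTheory.integral_const_mul, MeasureTheory.integral_const_mul, Eη, Eεη, Eη2]
      ring
    rw [hA, hB]
    ring
  have hCov : (∫ ω, U ω * V ω ∂μ) - (∫ ω, U ω ∂μ) * (∫ ω, V ω ∂μ) = 0 := by
    rw [EUV, EU, EV]; ring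
  -- variance of Y
  have hL2ε : MemLp ε 2 μ := by
    have h := (memLp_map_measure_iff measurable_id.aestronglyMeasurable
      hεm.aemeasurable).mp (by rw [hεlaw]; exact NSP.memLp_id_gaussian hc)
    exact h
  have hY2 : MemLp Y 2 μ := by
    rw [hYfun]
    exact (memLp_const θ).add hL2ε
  have hvar : variance Y μ = σ ^ 2 := by
    rw [variance_eq_sub hY2]
    have h1 : ∫ ω, Y ω ∂μ = θ := by
      simp only [hYfun]
      rw [integral_add (integrable_const θ) Iε, integral_const, Eε]
      simp
    have h2 : ∫ ω, Y ω ^ 2 ∂μ = θ ^ 2 + σ ^ 2 := by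
      have : (fun ω => Y ω ^ 2) = fun ω => θ ^ 2 + (2 * θ) * ε ω + ε ω ^ 2 := by
        funext ω; rw [hY ω]; ring
      have I1 : Integrable (fun ω => θ ^ 2 + (2 * θ) * ε ω) μ :=
        (integrable_const _).add (Iε.const_mul _)
      have I2 : Integrable (fun ω => (2 * θ) * ε ω) μ := Iε.const_mul _
      rw [this, integral_add I1 Iε2, integral_add (integrable_const _) I2,
        MeasureTheory.integral_const_mul, integral_const, Eε, Eε2]
      simp
    simp only [Pi.pow_apply] at *
    rw [h2, h1]
    ring
  refine ⟨by rw [hCov, hvar]; ring, hCov, ?_⟩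
  -- third part
  have IW2 : Integrable (fun ω => (ε ω - η ω / α) ^ 2) μ := by
    have hsplit : (fun ω => (ε ω - η ω / α) ^ 2)
        = fun ω => (ε ω ^ 2 - (2 / α) * (ε ω * η ω)) + (1 / α ^ 2) * η ω ^ 2 := by
      funext ω; field_simp; ring
    rw [hsplit]
    exact (Iε2.sub (Iεη.const_mul _)).add (Iη2.const_mul _)
  have EW2 : ∫ ω, (ε ω - η ω / α) ^ 2 ∂μ = σ ^ 2 * (1 + 1 / α ^ 2) := by
    have hsplit : (fun ω => (ε ω - η ω / α) ^ 2)
        = fun ω => (ε ω ^ 2 - (2 / α) * (ε ω * η ω)) + (1 / α ^ 2) * η ω ^ 2 := by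
      funext ω; field_simp; ring
    have I1 : Integrable (fun ω => ε ω ^ 2 - (2 / α) * (ε ω * η ω)) μ :=
      Iε2.sub (Iεη.const_mul _)
    have I2 : Integrable (fun ω => (1 / α ^ 2) * η ω ^ 2) μ := Iη2.const_mul _
    have I3 : Integrable (fun ω => (2 / α) * (ε ω * η ω)) μ := Iεη.const_mul _
    rw [hsplit, integral_add I1 I2, integral_sub Iε2 I3,
      MeasureTheory.integral_const_mul, MeasureTheory.integral_const_mul, Eε2, Eεη, Eη2]
    ring
  have hUm : Measurable U := by
    rw [hUfun]
    exact (measurable_const.add hεm).add (hηm.const_mul α)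
  have hfUm : Measurable (fun ω => δ (U ω) - θ) := (hδ.comp hUm).sub measurable_const
  have Icross : Integrable (fun ω => (δ (U ω) - θ) * (ε ω - η ω / α)) μ :=
    NSP.integrable_mul_sq hfUm.aestronglyMeasurable
      (hεm.sub (hηm.div_const α)).aestronglyMeasurable hint₁ IW2
  have hUfun' : ∀ ω, θ + ε ω + α * η ω = U ω := fun ω => by rw [hU ω, hY ω]
  have Ecross : ∫ ω, (δ (U ω) - θ) * (ε ω - η ω / α) ∂μ = 0 := by
    have hInt' : Integrable
        (fun ω => (fun u => δ u - θ) (θ + ε ω + α * η ω) * (ε ω - η ω / α)) μ := by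
      simp only [hUfun']
      exact Icross
    have h := NSP.cross_zero hc hα hεm hηm hindep hεlaw hηlaw
      (f := fun u => δ u - θ) (hδ.sub measurable_const) θ hInt'
    simp only [hUfun'] at h
    exact h
  have hsq : (fun ω => (δ (U ω) - V ω) ^ 2)
      = fun ω => (δ (U ω) - θ) ^ 2 - 2 * ((δ (U ω) - θ) * (ε ω - η ω / α))
          + (ε ω - η ω / α) ^ 2 := by
    funext ω
    rw [hV ω, hY ω]
    ring
  have I1 : Integrable
      (fun ω => (δ (U ω) - θ) ^ 2 - 2 * ((δ (U ω) - θ) * (ε ω - η ω / α))) μ :=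
    hint₁.sub (Icross.const_mul 2)
  have I2 : Integrable (fun ω => 2 * ((δ (U ω) - θ) * (ε ω - η ω / α))) μ :=
    Icross.const_mul 2
  rw [hsq, integral_add I1 IW2, integral_sub hint₁ I2,
    MeasureTheory.integral_const_mul, Ecross, EW2]
  ring
end
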